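/- Let A(x,y) = x·∑_{j=0}^{ρ} y^j A_{s_0+j} where the A_{s_0+j} are fixed 0-1 matrices, and H(x,y) = det(I − A(x,y)). If (x_0, y_0) ∈ ℂ² with y_0 ≠ 0 is a minimal solution of H(x,y) = 0 (meaning there is no solution (x,y) with |x| < |x_0| and |y| < |y_0|), then the maximal absolute value of the eigenvalues of A(x_0, y_0) equals 1. -/

import Mathlib

open Matrix

open Polynomial

lemma myEvalCharpoly {n : Type*} [Fintype n] [DecidableEq n] (M : Matrix n n ℂ) (μ : ℂ) :
    M.charpoly.eval μ = (μ • (1 : Matrix n n ℂ) - M).det := by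
  rw [Matrix.charpoly, ← Polynomial.coe_evalRingHom, RingHom.map_det]
  congr 1
  ext i j
  by_cases h : i = j <;>
    simp [h, Matrix.charmatrix_apply, Matrix.one_apply, Matrix.diagonal_apply]

lemma myProdLower (s : Multiset ℂ) (c : ℝ) (hc : 0 ≤ c) (f : ℂ → ℝ)
    (hf : ∀ a, 0 ≤ f a) (h : ∀ a ∈ s, c ≤ f a) :
    c ^ (Multiset.card s) ≤ (s.map f).prod := by
  induction s using Multiset.induction_on with
  | empty => simp
  | cons a s ih =>
    simp only [Multiset.map_cons, Multiset.prod_cons, Multiset.card_cons, pow_succ]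
    have h1 : c ≤ f a := h a (Multiset.mem_cons_self a s)
    have h2 : c ^ (Multiset.card s) ≤ (s.map f).prod :=
      ih fun b hb => h b (Multiset.mem_cons_of_mem hb)
    calc c ^ Multiset.card s * c ≤ (s.map f).prod * f a :=
          mul_le_mul h2 h1 hc (Multiset.prod_nonneg (by simpa using fun b _ => hf b))
      _ = f a * (s.map f).prod := mul_comm _ _


/-- Let `A(x,y) = x • ∑ j, y^j • As j` with the `As j` being 0-1
matrices whose (primitive) sum is the full transition matrix, and let
`H(x,y) = det (1 - A(x,y))`.  If `(x₀, y₀)`, `y₀ ≠ 0`, is a minimal solution of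
`H = 0` (no solution `(x,y)` has `|x| < |x₀|` and `|y| < |y₀|`), then the
maximal absolute value of the eigenvalues of `A(x₀,y₀)` is `1`: `1` is an
eigenvalue, and every eigenvalue has absolute value at most `1`. -/
theorem minimal_solution_spectral_radius_one
    {p ρ : ℕ} (hp : 0 < p)
    (As : Fin (ρ + 1) → Matrix (Fin p) (Fin p) ℂ)
    (h01 : ∀ j i k, As j i k = 0 ∨ As j i k = 1)
    (hprim : ∃ n : ℕ, ∀ i k, ((∑ j, As j) ^ n) i k ≠ 0)
    (x₀ y₀ : ℂ) (hy₀ : y₀ ≠ 0)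
    (hroot : Matrix.det (1 - x₀ • ∑ j : Fin (ρ + 1), y₀ ^ (j : ℕ) • As j) = 0)
    (hmin : ¬ ∃ x y : ℂ, Matrix.det (1 - x • ∑ j : Fin (ρ + 1), y ^ (j : ℕ) • As j) = 0 ∧
      ‖x‖ < ‖x₀‖ ∧ ‖y‖ < ‖y₀‖) :
    (1 : ℂ) ∈ spectrum ℂ (x₀ • ∑ j : Fin (ρ + 1), y₀ ^ (j : ℕ) • As j) ∧
    ∀ μ ∈ spectrum ℂ (x₀ • ∑ j : Fin (ρ + 1), y₀ ^ (j : ℕ) • As j), ‖μ‖ ≤ 1 := by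
  have hp' : Nonempty (Fin p) := ⟨⟨0, hp⟩⟩
  set B : ℂ → Matrix (Fin p) (Fin p) ℂ := fun y => ∑ j : Fin (ρ + 1), y ^ (j : ℕ) • As j with hB
  have hx₀ : x₀ ≠ 0 := by
    intro h
    rw [h, zero_smul, sub_zero, Matrix.det_one] at hroot
    exact one_ne_zero hroot
  constructor
  · rw [spectrum.mem_iff]
    intro h
    rw [_root_.map_one] at h
    have := (Matrix.isUnit_iff_isUnit_det _).mp h
    rw [hroot] at this
    exact this.ne_zero rfl
  · -- every eigenvalue of `x • B y` with `|x|<|x₀|, |y|<|y₀|` has abs < 1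
    have key : ∀ x y lam : ℂ, ‖x‖ < ‖x₀‖ → ‖y‖ < ‖y₀‖ →
        Matrix.det (lam • (1 : Matrix (Fin p) (Fin p) ℂ) - x • B y) = 0 →
        ‖lam‖ < 1 := by
      intro x y lam hx hy hdet
      by_contra hlam
      push_neg at hlam
      have hlam0 : lam ≠ 0 := by
        intro h; rw [h, norm_zero] at hlam; linarith
      have hfac : lam • (1 : Matrix (Fin p) (Fin p) ℂ) - x • B y
          = lam • ((1 : Matrix (Fin p) (Fin p) ℂ) - (lam⁻¹ * x) • B y) := by
        rw [smul_sub, smul_smul, ← mul_assoc, mul_inv_cancel₀ hlam0, one_mul]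
      rw [hfac, Matrix.det_smul] at hdet
      have hdet' : Matrix.det ((1 : Matrix (Fin p) (Fin p) ℂ) - (lam⁻¹ * x) • B y) = 0 := by
        have := pow_ne_zero (Fintype.card (Fin p)) hlam0
        exact (mul_eq_zero.mp hdet).resolve_left this
      apply hmin
      refine ⟨lam⁻¹ * x, y, hdet', ?_, hy⟩
      rw [norm_mul, norm_inv]
      calc (‖lam‖)⁻¹ * ‖x‖ ≤ 1 * ‖x‖ := by
            apply mul_le_mul_of_nonneg_right _ (norm_nonneg x)
            rw [inv_le_one_iff₀]; right; exact hlam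
        _ = ‖x‖ := one_mul _
        _ < ‖x₀‖ := hx
    intro μ hμ
    by_contra hgt
    push_neg at hgt
    -- `det (μ•1 - M) = 0`
    have h0 : Matrix.det (μ • (1 : Matrix (Fin p) (Fin p) ℂ) - x₀ • B y₀) = 0 := by
      rw [spectrum.mem_iff] at hμ
      have h1 : ¬ IsUnit (Matrix.det (μ • (1 : Matrix (Fin p) (Fin p) ℂ) - x₀ • B y₀)) := by
        intro h
        exact hμ (by
          rw [Algebra.algebraMap_eq_smul_one]
          exact (Matrix.isUnit_iff_isUnit_det _).mpr h)
      by_contra h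
      exact h1 (isUnit_iff_ne_zero.mpr h)
    set ε : ℝ := (‖μ‖ - 1) ^ p with hε
    have hεpos : 0 < ε := pow_pos (by linarith) p
    -- lower bound for `t ∈ (0,1)`
    have hbound : ∀ t : ℝ, 0 < t → t < 1 →
        ε ≤ ‖(Matrix.det (μ • (1 : Matrix (Fin p) (Fin p) ℂ)
          - ((t : ℂ) * x₀) • B ((t : ℂ) * y₀)))‖ := by
      intro t ht0 ht1
      set N : Matrix (Fin p) (Fin p) ℂ := ((t : ℂ) * x₀) • B ((t : ℂ) * y₀) with hN
      have habs_t : ‖(t : ℂ)‖ = t := by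
        rw [Complex.norm_real, Real.norm_eq_abs, abs_of_pos ht0]
      have hxlt : ‖((t : ℂ) * x₀)‖ < ‖x₀‖ := by
        rw [norm_mul, habs_t]
        have := norm_pos_iff.mpr hx₀
        nlinarith
      have hylt : ‖((t : ℂ) * y₀)‖ < ‖y₀‖ := by
        rw [norm_mul, habs_t]
        have := norm_pos_iff.mpr hy₀
        nlinarith
      have hdeg : N.charpoly.natDegree = p := by
        rw [Matrix.charpoly_natDegree_eq_dim, Fintype.card_fin]
      have hsplit : N.charpoly.Splits := IsAlgClosed.splits _
      have hcard : Multiset.card N.charpoly.roots = p := by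
        rw [(Polynomial.splits_iff_card_roots).mp hsplit, hdeg]
      have hfactor : N.charpoly = (N.charpoly.roots.map fun a => X - C a).prod :=
        hsplit.eq_prod_roots_of_monic (Matrix.charpoly_monic N)
      have heval : Matrix.det (μ • (1 : Matrix (Fin p) (Fin p) ℂ) - N)
          = (N.charpoly.roots.map fun a => μ - a).prod := by
        rw [← myEvalCharpoly]
        conv_lhs => rw [hfactor]
        rw [Polynomial.eval_multiset_prod, Multiset.map_map]
        congr 1
        apply Multiset.map_congr rfl
        intro a _
        simp
      rw [heval, show ‖(N.charpoly.roots.map fun a => μ - a).prod‖ = ((N.charpoly.roots.map fun a => μ - a).map norm).prod from map_multiset_prod (normHom (α := ℂ)) _, Multiset.map_map]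
      have : ε = (‖μ‖ - 1) ^ Multiset.card N.charpoly.roots := by
        rw [hcard]
      rw [this]
      apply myProdLower _ _ (by linarith) _ (fun a => norm_nonneg _)
      intro a ha
      have hroot_a : Matrix.det (a • (1 : Matrix (Fin p) (Fin p) ℂ) - N) = 0 := by
        rw [← myEvalCharpoly]
        exact (Polynomial.isRoot_of_mem_roots ha)
      have hlt : ‖a‖ < 1 := key _ _ _ hxlt hylt hroot_a
      show ‖μ‖ - 1 ≤ ‖(μ - a)‖
      calc ‖μ‖ - 1 ≤ ‖μ‖ - ‖a‖ := by linarith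
        _ ≤ ‖(μ - a)‖ := by
              simpa using norm_sub_norm_le μ a
    -- continuity in `t` yields a contradiction
    have hFc : Continuous fun t : ℝ => Matrix.det (μ • (1 : Matrix (Fin p) (Fin p) ℂ)
        - ((t : ℂ) * x₀) • B ((t : ℂ) * y₀)) := by
      apply Continuous.matrix_det
      apply Continuous.sub continuous_const
      apply Continuous.smul (Complex.continuous_ofReal.mul continuous_const)
      rw [hB]
      apply continuous_finset_sum
      intro j _
      exact ((Complex.continuous_ofReal.mul continuous_const).pow _).smul continuous_const
    have hF1 : Matrix.det (μ • (1 : Matrix (Fin p) (Fin p) ℂ)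
        - (((1 : ℝ) : ℂ) * x₀) • B (((1 : ℝ) : ℂ) * y₀)) = 0 := by
      rw [Complex.ofReal_one, one_mul, one_mul]
      exact h0
    have hc := hFc.continuousAt (x := (1 : ℝ))
    rw [Metric.continuousAt_iff] at hc
    obtain ⟨δ, hδ0, hδ⟩ := hc ε hεpos
    set t : ℝ := max (1/2) (1 - δ/2) with htdef
    have ht0 : 0 < t := lt_of_lt_of_le (by norm_num) (le_max_left _ _)
    have ht1 : t < 1 := max_lt (by norm_num) (by linarith)
    have htd : dist t 1 < δ := by
      rw [Real.dist_eq, abs_of_nonpos (by linarith)]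
      have : 1 - δ/2 ≤ t := le_max_right _ _
      linarith
    have hlt := hδ htd
    rw [hF1, Complex.dist_eq, sub_zero] at hlt
    exact absurd hlt (not_lt.mpr (hbound t ht0 ht1))
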